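/- Let 1 ≤ k ≤ d and set α = ⌊(d−k)/2⌋. The number Z_k(d) of ±1-sequences of some length ℓ with k ≤ ℓ ≤ d such that every proper partial sum (over the first i terms, 1 ≤ i < ℓ) is strictly greater than −k and the total sum equals −k, is Z_k(d) = ∑_{m=0}^{α} (k/(2m+k)) · C(2m+k, m) = ∑_{m=0}^{α} ( C(2m+k−1, m) − C(2m+k−1, m−1) ). (Such a sequence necessarily has length ℓ = k + 2m for some 0 ≤ m ≤ α.) -/

import Mathlib

/-- The partial sum `a 0 + a 1 + ⋯ + a i` of the sequence `a`. -/
def partialSum {n : ℕ} (a : Fin n → ℤ) (i : Fin n) : ℤ :=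
  ∑ j ∈ Finset.univ.filter (fun j => j ≤ i), a j

/-- `a : Fin ℓ → ℤ` is a `±1`-sequence whose proper partial sums (over the first
`i` terms, `1 ≤ i < ℓ`) are all strictly greater than `-k` and whose total sum is
`-k`. -/
def ExhaustedAtEnd (k : ℕ) {ℓ : ℕ} (a : Fin ℓ → ℤ) : Prop :=
  (∀ i, a i = 1 ∨ a i = -1) ∧
  (∀ i : Fin ℓ, (i : ℕ) + 1 < ℓ → -(k : ℤ) < partialSum a i) ∧
  (∑ i, a i) = -(k : ℤ)

/-- Binomial coefficient `C(a, b)` with integer lower index, equal to `0` when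
`b < 0`. -/
def chooseInt (a : ℕ) (b : ℤ) : ℤ :=
  if 0 ≤ b then (a.choose b.toNat : ℤ) else 0

def GoodL (k : ℕ) (l : List ℤ) : Prop :=
  (∀ x ∈ l, x = (1:ℤ) ∨ x = -1) ∧
  (∀ i : ℕ, 1 ≤ i → i < l.length → -(k:ℤ) < ((l.take i).sum)) ∧
  l.sum = -(k:ℤ)

lemma take_sum_eq (l : List ℤ) (i : ℕ) :
    (l.take i).sum = ∑ j ∈ Finset.range i, l.getD j 0 := by
  induction l generalizing i with
  | nil => simp
  | cons x t ih =>
    cases i with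
    | zero => simp
    | succ n =>
      rw [List.take_succ_cons, List.sum_cons, ih, Finset.sum_range_succ']
      simp [add_comm]

lemma sum_get (l : List ℤ) : ∑ i, l.get i = l.sum := by
  rw [← List.sum_ofFn, List.ofFn_get]

lemma partialSum_get (l : List ℤ) (i : Fin l.length) :
    partialSum l.get i = (l.take (i+1)).sum := by
  rw [take_sum_eq l (i+1), partialSum, Finset.sum_filter]
  calc ∑ j : Fin l.length, (if j ≤ i then l.get j else 0)
      = ∑ j : Fin l.length, (if (j:ℕ) ≤ (i:ℕ) then l.getD (j:ℕ) 0 else 0) :=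
        Finset.sum_congr rfl (fun j _ => by
          simp only [Fin.le_def, List.getD_eq_getElem _ _ j.isLt]; rfl)
    _ = ∑ j ∈ Finset.range l.length, (if j ≤ (i:ℕ) then l.getD j 0 else 0) :=
        Fin.sum_univ_eq_sum_range (fun m => if m ≤ (i:ℕ) then l.getD m 0 else 0) l.length
    _ = ∑ j ∈ (Finset.range l.length).filter (fun j => j ≤ (i:ℕ)), l.getD j 0 :=
        (Finset.sum_filter _ _).symm
    _ = ∑ j ∈ Finset.range ((i:ℕ)+1), l.getD j 0 := by
        congr 1
        ext j
        simp only [Finset.mem_filter, Finset.mem_range]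
        have := i.isLt
        omega

lemma exhausted_iff_goodL (k : ℕ) (l : List ℤ) :
    ExhaustedAtEnd k l.get ↔ GoodL k l := by
  constructor
  · rintro ⟨h1, h2, h3⟩
    refine ⟨?_, ?_, ?_⟩
    · intro x hx
      obtain ⟨i, rfl⟩ := List.mem_iff_get.1 hx
      exact h1 i
    · intro i hi1 hi2
      have := h2 ⟨i - 1, by omega⟩ (by simpa using by omega)
      rw [partialSum_get] at this
      simpa [Nat.sub_add_cancel hi1] using this
    · rw [← h3, sum_get]
  · rintro ⟨h1, h2, h3⟩
    refine ⟨?_, ?_, ?_⟩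
    · intro i; exact h1 _ (List.mem_iff_get.2 ⟨i, rfl⟩)
    · intro i hi
      rw [partialSum_get]
      exact h2 (i+1) (by omega) (by omega)
    · rw [← h3, sum_get]


open Classical in
noncomputable def goodF (k n : ℕ) : Finset (List ℤ) :=
  ((Finset.univ : Finset (Fin n → Bool)).image
    (fun b => List.ofFn (fun i => if b i then (1:ℤ) else -1))).filter (GoodL k)

lemma mem_goodF {k n : ℕ} {l : List ℤ} : l ∈ goodF k n ↔ l.length = n ∧ GoodL k l := by
  classical
  rw [goodF, Finset.mem_filter, Finset.mem_image]
  constructor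
  · rintro ⟨⟨b, -, rfl⟩, hg⟩
    exact ⟨by simp, hg⟩
  · rintro ⟨hl, hg⟩
    refine ⟨⟨fun i => decide (l.get ⟨i, hl ▸ i.isLt⟩ = 1), Finset.mem_univ _, ?_⟩, hg⟩
    apply List.ext_get (by simp [hl])
    intro i h1 h2
    rcases hg.1 l[i] (l.getElem_mem h2) with h | h <;>
      simp [List.get_ofFn, List.get_eq_getElem, h]

lemma pm_one_list (l : List ℤ) (h : ∀ x ∈ l, x = (1:ℤ) ∨ x = -1) :
    ∃ p q : ℕ, l.length = p + q ∧ l.sum = (p : ℤ) - q := by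
  induction l with
  | nil => exact ⟨0, 0, by simp, by simp⟩
  | cons x t ih =>
    obtain ⟨p, q, h1, h2⟩ := ih (fun y hy => h y (List.mem_cons_of_mem _ hy))
    rcases h x (List.mem_cons_self) with rfl | rfl
    · exact ⟨p + 1, q, by simp [h1]; omega, by simp [h2]; push_cast; ring⟩
    · exact ⟨p, q + 1, by simp [h1]; omega, by simp [h2]; push_cast; ring⟩

lemma goodF_eq_empty {k n : ℕ} (h : ∀ m, n ≠ k + 2 * m) : goodF k n = ∅ := by
  ext l
  simp only [Finset.notMem_empty, iff_false, mem_goodF, not_and]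
  rintro rfl hg
  obtain ⟨p, q, h1, h2⟩ := pm_one_list l hg.1
  have h3 := hg.2.2
  rw [h2] at h3
  exact h (p) (by omega)

lemma goodL_cons_iff {k : ℕ} (hk : 1 ≤ k) (x : ℤ) (t : List ℤ) :
    GoodL k (x :: t) ↔
      ((x = 1 ∧ GoodL (k+1) t) ∨ (x = -1 ∧ (t = [] ∨ 2 ≤ k) ∧ GoodL (k-1) t)) := by
  constructor
  · rintro ⟨h1, h2, h3⟩
    have hx := h1 x (List.mem_cons_self)
    have ht : ∀ y ∈ t, y = (1:ℤ) ∨ y = -1 := fun y hy => h1 y (List.mem_cons_of_mem _ hy)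
    have hsum : x + t.sum = -(k:ℤ) := by simpa using h3
    have hpre : ∀ j : ℕ, 1 ≤ j → j < t.length → -(k:ℤ) < x + (t.take j).sum := by
      intro j hj1 hj2
      have := h2 (j+1) (by omega) (by simp; omega)
      simpa [List.take_succ_cons] using this
    rcases hx with rfl | rfl
    · left
      refine ⟨rfl, ht, ?_, ?_⟩
      · intro j hj1 hj2
        have := hpre j hj1 hj2
        push_cast
        omega
      · push_cast; omega
    · right
      have hside : t = [] ∨ 2 ≤ k := by
        rcases eq_or_ne t [] with h | h
        · exact Or.inl h
        · right
          have hlen : 1 ≤ t.length := List.length_pos_iff.2 h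
          have := h2 1 le_rfl (by simp; omega)
          rw [show (1:ℕ) = 0 + 1 from rfl, List.take_succ_cons] at this
          simp at this
          omega
      refine ⟨rfl, hside, ht, ?_, ?_⟩
      · intro j hj1 hj2
        have := hpre j hj1 hj2
        have : -(k:ℤ) < -1 + (t.take j).sum := this
        push_cast [Nat.cast_sub hk]
        omega
      · push_cast [Nat.cast_sub hk]; omega
  · rintro (⟨rfl, ht, hpre, hsum⟩ | ⟨rfl, hside, ht, hpre, hsum⟩)
    · refine ⟨?_, ?_, ?_⟩
      · intro y hy
        rcases List.mem_cons.1 hy with rfl | hy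
        · exact Or.inl rfl
        · exact ht y hy
      · intro i hi1 hi2
        rcases Nat.exists_eq_add_of_le hi1 with ⟨j, rfl⟩
        rw [add_comm, List.take_succ_cons, List.sum_cons]
        rcases Nat.eq_zero_or_pos j with rfl | hj
        · simp; omega
        · have := hpre j hj (by simp at hi2; omega)
          push_cast at this ⊢
          omega
      · simp only [List.sum_cons, hsum]; push_cast; ring
    · refine ⟨?_, ?_, ?_⟩
      · intro y hy
        rcases List.mem_cons.1 hy with rfl | hy
        · exact Or.inr rfl
        · exact ht y hy
      · intro i hi1 hi2
        rcases Nat.exists_eq_add_of_le hi1 with ⟨j, rfl⟩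
        rw [add_comm, List.take_succ_cons, List.sum_cons]
        rcases Nat.eq_zero_or_pos j with rfl | hj
        · simp only [List.take_zero, List.sum_nil, add_zero]
          have : t ≠ [] := by
            intro hteq; rw [hteq] at hi2; simp only [List.length_cons, List.length_nil] at hi2; omega
          rcases hside with h | h
          · exact absurd h this
          · push_cast; omega
        · have := hpre j hj (by simp at hi2; omega)
          push_cast [Nat.cast_sub hk] at this ⊢
          omega
      · simp only [List.sum_cons, hsum]
        push_cast [Nat.cast_sub hk]
        try ring

lemma cons_injective (x : ℤ) : Function.Injective (fun t : List ℤ => x :: t) :=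
  fun a b h => by simpa using h

lemma goodF_succ_big {k n : ℕ} (hk : 2 ≤ k) :
    goodF k (n+1) =
      (goodF (k+1) n).image (fun t => (1:ℤ) :: t) ∪
      (goodF (k-1) n).image (fun t => (-1:ℤ) :: t) := by
  ext l
  simp only [Finset.mem_union, Finset.mem_image, mem_goodF]
  constructor
  · rintro ⟨hlen, hg⟩
    cases l with
    | nil => simp at hlen
    | cons x t =>
      rcases (goodL_cons_iff (by omega) x t).1 hg with ⟨rfl, hg'⟩ | ⟨rfl, -, hg'⟩
      · exact Or.inl ⟨t, ⟨by simpa using hlen, hg'⟩, rfl⟩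
      · exact Or.inr ⟨t, ⟨by simpa using hlen, hg'⟩, rfl⟩
  · rintro (⟨t, ⟨hlen, hg⟩, rfl⟩ | ⟨t, ⟨hlen, hg⟩, rfl⟩)
    · exact ⟨by simp [hlen], (goodL_cons_iff (by omega) _ t).2 (Or.inl ⟨rfl, hg⟩)⟩
    · exact ⟨by simp [hlen], (goodL_cons_iff (by omega) _ t).2 (Or.inr ⟨rfl, Or.inr hk, hg⟩)⟩

lemma goodF_succ_one {n : ℕ} (hn : 1 ≤ n) :
    goodF 1 (n+1) = (goodF 2 n).image (fun t => (1:ℤ) :: t) := by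
  ext l
  simp only [Finset.mem_image, mem_goodF]
  constructor
  · rintro ⟨hlen, hg⟩
    cases l with
    | nil => simp at hlen
    | cons x t =>
      rcases (goodL_cons_iff le_rfl x t).1 hg with ⟨rfl, hg'⟩ | ⟨rfl, hs, hg'⟩
      · exact ⟨t, ⟨by simpa using hlen, hg'⟩, rfl⟩
      · exfalso
        rcases hs with h | h
        · rw [h] at hlen; simp at hlen; omega
        · omega
  · rintro ⟨t, ⟨hlen, hg⟩, rfl⟩
    exact ⟨by simp [hlen], (goodL_cons_iff le_rfl _ t).2 (Or.inl ⟨rfl, hg⟩)⟩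

lemma goodF_one_one : goodF 1 1 = {[(-1:ℤ)]} := by
  ext l
  simp only [Finset.mem_singleton, mem_goodF]
  constructor
  · rintro ⟨hlen, hg⟩
    match l, hlen with
    | [x], _ =>
      have := hg.2.2
      simp at this
      rw [this]
  · rintro rfl
    refine ⟨rfl, fun x hx => by simp at hx; simp [hx], fun i h1 h2 => by simp at h2; omega, by simp⟩

lemma card_goodF_succ_big {k n : ℕ} (hk : 2 ≤ k) :
    (goodF k (n+1)).card = (goodF (k+1) n).card + (goodF (k-1) n).card := by
  rw [goodF_succ_big hk, Finset.card_union_of_disjoint, Finset.card_image_of_injective _ (cons_injective 1),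
    Finset.card_image_of_injective _ (cons_injective (-1))]
  rw [Finset.disjoint_left]
  rintro l hl1 hl2
  simp only [Finset.mem_image] at hl1 hl2
  obtain ⟨t1, -, rfl⟩ := hl1
  obtain ⟨t2, -, h⟩ := hl2
  simp at h

lemma card_goodF_succ_one {n : ℕ} (hn : 1 ≤ n) :
    (goodF 1 (n+1)).card = (goodF 2 n).card := by
  rw [goodF_succ_one hn, Finset.card_image_of_injective _ (cons_injective 1)]

def Bn (k m : ℕ) : ℤ := ((2*m+k-1).choose m : ℤ) - chooseInt (2*m+k-1) ((m:ℤ)-1)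

lemma chooseInt_neg_one (a : ℕ) : chooseInt a (-1) = 0 := by simp [chooseInt]

lemma chooseInt_coe (a n : ℕ) : chooseInt a (n : ℤ) = (a.choose n : ℤ) := by
  simp [chooseInt]

lemma Bn_zero (k : ℕ) : Bn k 0 = 1 := by
  simp [Bn, chooseInt]

lemma Bn_succ_cast (k j : ℕ) :
    Bn k (j+1) = ((2*(j+1)+k-1).choose (j+1) : ℤ) - ((2*(j+1)+k-1).choose j : ℤ) := by
  rw [Bn]
  congr 1
  rw [show ((j+1 : ℕ) : ℤ) - 1 = ((j : ℕ) : ℤ) by push_cast; ring, chooseInt_coe]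

-- identity: Bn 1 (j+1) = Bn 2 j
lemma Bn_one_eq (j : ℕ) : Bn 1 (j+1) = Bn 2 j := by
  cases j with
  | zero =>
    norm_num [Bn, chooseInt]
  | succ i =>
    rw [Bn_succ_cast, Bn_succ_cast]
    rw [show 2*(i+1+1)+1-1 = (2*i+3)+1 by omega]
    rw [show 2*(i+1)+2-1 = 2*i+3 by omega]
    rw [Nat.choose_succ_succ (2*i+3) (i+1), Nat.choose_succ_succ (2*i+3) i]
    have hsymm : (2*i+3).choose (i+2) = (2*i+3).choose (i+1) := by
      rw [← Nat.choose_symm (by omega)]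
      congr 1
      omega
    push_cast [hsymm]
    ring

-- identity: Bn k (j+1) = Bn (k+1) j + Bn (k-1) (j+1) for k ≥ 2
lemma Bn_pascal (k j : ℕ) (hk : 2 ≤ k) :
    Bn k (j+1) = Bn (k+1) j + Bn (k-1) (j+1) := by
  obtain ⟨c, rfl⟩ := Nat.exists_eq_add_of_le hk
  cases j with
  | zero =>
    have h1 : Bn (2+c) 1 = ((c+3).choose 1 : ℤ) - ((c+3).choose 0 : ℤ) := by
      rw [Bn_succ_cast]; norm_num [show 2*1+(2+c)-1 = c+3 by omega]
    have h2 : Bn (2+c+1) 0 = 1 := Bn_zero _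
    have h3 : Bn (2+c-1) 1 = ((c+2).choose 1 : ℤ) - ((c+2).choose 0 : ℤ) := by
      rw [Bn_succ_cast]; norm_num [show 2*1+(2+c-1)-1 = c+2 by omega, show 2+c-1 = c+1 by omega]; omega
    rw [h1, h2, h3]
    simp [Nat.choose_one_right]
    push_cast
    ring
  | succ i =>
    rw [Bn_succ_cast, Bn_succ_cast, Bn_succ_cast]
    rw [show 2*(i+1+1)+(2+c)-1 = (2*i+c+4)+1 by omega]
    rw [show 2*(i+1)+(2+c+1)-1 = 2*i+c+4 by omega]
    rw [show 2*(i+1+1)+(2+c-1)-1 = 2*i+c+4 by omega]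
    rw [Nat.choose_succ_succ (2*i+c+4) (i+1), Nat.choose_succ_succ (2*i+c+4) i]
    push_cast
    ring

lemma card_closed : ∀ n k m : ℕ, 1 ≤ k → n = k + 2*m → ((goodF k n).card : ℤ) = Bn k m := by
  intro n
  induction n with
  | zero => intro k m hk h; omega
  | succ n ih =>
    intro k m hk h
    rcases Nat.lt_or_ge k 2 with hk2 | hk2
    · -- k = 1
      have hk1 : k = 1 := by omega
      subst hk1
      rcases Nat.eq_zero_or_pos n with rfl | hn
      · have hm : m = 0 := by omega
        subst hm
        rw [goodF_one_one, Bn_zero]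
        simp
      · have hm : 1 ≤ m := by omega
        obtain ⟨j, rfl⟩ : ∃ j, m = j + 1 := ⟨m - 1, by omega⟩
        rw [card_goodF_succ_one hn, ih 2 j (by omega) (by omega), Bn_one_eq]
    · -- k ≥ 2
      rcases Nat.eq_zero_or_pos m with rfl | hm
      · -- n = k - 1
        rw [card_goodF_succ_big hk2]
        have h1 : goodF (k+1) n = ∅ := goodF_eq_empty (fun m' => by omega)
        have h2 : ((goodF (k-1) n).card : ℤ) = Bn (k-1) 0 := ih (k-1) 0 (by omega) (by omega)
        rw [h1, Bn_zero]
        simp only [Finset.card_empty, Nat.zero_add]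
        rw [h2, Bn_zero]
      · obtain ⟨j, rfl⟩ : ∃ j, m = j + 1 := ⟨m - 1, by omega⟩
        rw [card_goodF_succ_big hk2]
        push_cast
        rw [ih (k+1) j (by omega) (by omega), ih (k-1) (j+1) (by omega) (by omega)]
        exact (Bn_pascal k j hk2).symm

lemma Bn_q (k m : ℕ) (hk : 1 ≤ k) :
    ((Bn k m : ℤ) : ℚ) = (k:ℚ)/(2*m+k) * ((2*m+k).choose m : ℚ) := by
  cases m with
  | zero =>
    rw [Bn_zero]
    have : (k:ℚ) ≠ 0 := by positivity
    simp [this]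
  | succ j =>
    have hN : 2*(j+1)+k-1 = 2*j+k+1 := by omega
    have hN1 : 2*(j+1)+k = (2*j+k+1)+1 := by omega
    rw [Bn_succ_cast, hN, hN1]
    have hP : (((2*j+k+1)+1).choose (j+1) : ℚ)
        = ((2*j+k+1).choose j : ℚ) + ((2*j+k+1).choose (j+1) : ℚ) := by
      rw [Nat.choose_succ_succ]; push_cast; ring
    have hM : (2*(j:ℚ)+k+2) * ((2*j+k+1).choose j : ℚ)
        = (((2*j+k+1)+1).choose (j+1) : ℚ) * (j+1) := by
      have hc : ((2*j+k+1)+1) * (2*j+k+1).choose j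
          = ((2*j+k+1)+1).choose (j+1) * (j+1) := Nat.add_one_mul_choose_eq (2*j+k+1) j
      have := congrArg (fun x : ℕ => (x : ℚ)) hc
      push_cast at this
      linarith [this]
    have hne : (2*(((j:ℚ))+1)+k) ≠ 0 := by positivity
    rw [div_mul_eq_mul_div, eq_div_iff (by push_cast at hne ⊢; convert hne using 1; try ring)]
    push_cast at hP hM ⊢
    linear_combination (-(2*(j:ℚ)+k+2)) * hP - 2 * hM

lemma sum_Icc_eq (k d : ℕ) (hk : 1 ≤ k) (hkd : k ≤ d) :
    ∑ n ∈ Finset.Icc k d, ((goodF k n).card : ℤ)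
      = ∑ m ∈ Finset.range ((d - k) / 2 + 1), Bn k m := by
  have hsub : (Finset.range ((d - k) / 2 + 1)).image (fun m => k + 2*m) ⊆ Finset.Icc k d := by
    intro n hn
    simp only [Finset.mem_image, Finset.mem_range] at hn
    obtain ⟨m, hm, rfl⟩ := hn
    simp only [Finset.mem_Icc]
    omega
  rw [← Finset.sum_subset hsub, Finset.sum_image (by intros a _ b _ h; dsimp only at h; omega)]
  · apply Finset.sum_congr rfl
    intro m hm
    exact card_closed (k + 2*m) k m hk rfl
  · intro n hn hn2
    simp only [Finset.mem_Icc] at hn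
    simp only [Finset.mem_image, Finset.mem_range] at hn2
    push_neg at hn2
    have : ∀ m, n ≠ k + 2*m := by
      intro m hm
      exact hn2 m (by omega) (by omega)
    rw [goodF_eq_empty this]
    simp

/-- with `α = ⌊(d-k)/2⌋`, the number `Z_k(d)` of `±1`-sequences of
some length `ℓ` with `k ≤ ℓ ≤ d`, proper partial sums `> -k` and total sum `-k`
equals `∑_{m=0}^{α} (k/(2m+k)) C(2m+k, m) = ∑_{m=0}^{α} (C(2m+k-1, m) - C(2m+k-1, m-1))`. -/
theorem bonus_eggs_exhausted_count (k d : ℕ) (hk : 1 ≤ k) (hkd : k ≤ d) :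
    ((Nat.card {p : Σ ℓ : ℕ, Fin ℓ → ℤ //
          k ≤ p.1 ∧ p.1 ≤ d ∧ ExhaustedAtEnd k p.2} : ℕ) : ℚ)
        = ∑ m ∈ Finset.range ((d - k) / 2 + 1),
            (k : ℚ) / (2 * m + k) * ((2 * m + k).choose m : ℚ) ∧
    ((Nat.card {p : Σ ℓ : ℕ, Fin ℓ → ℤ //
          k ≤ p.1 ∧ p.1 ≤ d ∧ ExhaustedAtEnd k p.2} : ℕ) : ℤ)
        = ∑ m ∈ Finset.range ((d - k) / 2 + 1),
            (((2 * m + k - 1).choose m : ℤ) - chooseInt (2 * m + k - 1) ((m : ℤ) - 1)) := by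
  classical
  set bigF : Finset (List ℤ) := (Finset.Icc k d).biUnion (goodF k) with hbigF
  have hmem : ∀ l : List ℤ, l ∈ bigF ↔
      (k ≤ l.length ∧ l.length ≤ d ∧ ExhaustedAtEnd k l.get) := by
    intro l
    rw [hbigF, Finset.mem_biUnion]
    constructor
    · rintro ⟨n, hn, hl⟩
      rw [Finset.mem_Icc] at hn
      rw [mem_goodF] at hl
      exact ⟨hl.1 ▸ hn.1, hl.1 ▸ hn.2, (exhausted_iff_goodL k l).2 hl.2⟩
    · rintro ⟨h1, h2, h3⟩
      exact ⟨l.length, Finset.mem_Icc.2 ⟨h1, h2⟩,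
        mem_goodF.2 ⟨rfl, (exhausted_iff_goodL k l).1 h3⟩⟩
  have hequiv : {p : Σ ℓ : ℕ, Fin ℓ → ℤ // k ≤ p.1 ∧ p.1 ≤ d ∧ ExhaustedAtEnd k p.2}
      ≃ {l : List ℤ // l ∈ bigF} := by
    apply Equiv.symm
    apply (List.equivSigmaTuple (α := ℤ)).subtypeEquiv
    intro l
    rw [hmem l]
    rfl
  have hcard : Nat.card {p : Σ ℓ : ℕ, Fin ℓ → ℤ //
      k ≤ p.1 ∧ p.1 ≤ d ∧ ExhaustedAtEnd k p.2} = bigF.card := by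
    rw [Nat.card_congr hequiv, Nat.card_eq_finsetCard]
  have hdisj : ∀ n₁ ∈ Finset.Icc k d, ∀ n₂ ∈ Finset.Icc k d, n₁ ≠ n₂ →
      Disjoint (goodF k n₁) (goodF k n₂) := by
    intro n₁ _ n₂ _ hne
    rw [Finset.disjoint_left]
    intro l h1 h2
    rw [mem_goodF] at h1 h2
    exact hne (h1.1 ▸ h2.1)
  have hsum : (bigF.card : ℤ) = ∑ m ∈ Finset.range ((d - k) / 2 + 1), Bn k m := by
    rw [hbigF, Finset.card_biUnion hdisj]
    push_cast
    exact sum_Icc_eq k d hk hkd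
  have hZ : ((Nat.card {p : Σ ℓ : ℕ, Fin ℓ → ℤ //
      k ≤ p.1 ∧ p.1 ≤ d ∧ ExhaustedAtEnd k p.2} : ℕ) : ℤ)
      = ∑ m ∈ Finset.range ((d - k) / 2 + 1), Bn k m := by
    rw [hcard]; exact hsum
  constructor
  · have : ((Nat.card {p : Σ ℓ : ℕ, Fin ℓ → ℤ //
        k ≤ p.1 ∧ p.1 ≤ d ∧ ExhaustedAtEnd k p.2} : ℕ) : ℚ)
        = ((∑ m ∈ Finset.range ((d - k) / 2 + 1), Bn k m : ℤ) : ℚ) := by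
      rw [← hZ]; push_cast; ring
    rw [this, Int.cast_sum]
    exact Finset.sum_congr rfl (fun m _ => Bn_q k m hk)
  · exact hZ
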